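/- Let (E, ‖·‖) be a Banach space with Hamel basis {e_k}_{k∈I} such that every coordinate functional π_k : E → 𝕂 (sending u to its k-th coordinate in the basis) is continuous. Then E is finite-dimensional. -/

import Mathlib

/-- a Banach space with a Hamel basis all of whose coordinate
functionals are continuous is finite-dimensional. -/
theorem stmt18 {𝕜 E ι : Type*} [RCLike 𝕜] [NormedAddCommGroup E] [NormedSpace 𝕜 E]
    [CompleteSpace E] (b : Module.Basis ι 𝕜 E)
    (h : ∀ i : ι, Continuous (b.coord i)) :
    FiniteDimensional 𝕜 E := by
  by_contra hfin
  have hι : Infinite ι := by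
    by_contra hi
    rw [not_infinite_iff_finite] at hi
    haveI := Fintype.ofFinite ι
    exact hfin (Module.Finite.of_basis b)
  let f := Infinite.natEmbedding ι
  set S : ℕ → Submodule 𝕜 E :=
    fun n => ⨅ k : {k : ℕ // n ≤ k}, LinearMap.ker (b.coord (f k.1)) with hS
  have hmem : ∀ n u, u ∈ S n ↔ ∀ k, n ≤ k → b.coord (f k) u = 0 := by
    intro n u
    simp [hS, Submodule.mem_iInf, LinearMap.mem_ker, Subtype.forall]
  have hclosed : ∀ n, IsClosed (S n : Set E) := by
    intro n
    have : (S n : Set E) = ⋂ k : {k : ℕ // n ≤ k}, (b.coord (f k.1)) ⁻¹' {0} := by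
      ext u
      simp [hmem n u, Subtype.forall]
    rw [this]
    exact isClosed_iInter fun k => (isClosed_singleton).preimage (h _)
  have hcover : ⋃ n, (S n : Set E) = Set.univ := by
    ext u
    simp only [Set.mem_iUnion, Set.mem_univ, iff_true, SetLike.mem_coe]
    have hfin' : {k : ℕ | b.repr u (f k) ≠ 0}.Finite := by
      have : {k : ℕ | b.repr u (f k) ≠ 0} = f ⁻¹' {i : ι | b.repr u i ≠ 0} := rfl
      rw [this]
      exact Set.Finite.preimage (f.injective.injOn) (b.repr u).finite_support
    obtain ⟨N, hN⟩ := hfin'.bddAbove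
    refine ⟨N + 1, (hmem _ _).2 fun k hk => ?_⟩
    rw [Module.Basis.coord_apply]
    by_contra hne
    have := hN (Set.mem_setOf.2 hne)
    omega
  obtain ⟨n, x, hx⟩ := nonempty_interior_of_iUnion_of_closed hclosed hcover
  have htop : S n = ⊤ := Submodule.eq_top_of_nonempty_interior' _ ⟨x, hx⟩
  have : b.coord (f n) (b (f n)) = 0 :=
    (hmem n _).1 (htop ▸ Submodule.mem_top) n le_rfl
  simp at this
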